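/- Let λ̂₁, λ̂₂, μ̂₁, μ̂₂ > 0 with λ̂₁ < μ̂₁, and let k(y) be a twice-differentiable solution of R(k(y),y)=0 near y=1 with k(1)=1, where R(x,y) = λ̂₁(1−x)xy + λ̂₂(1−y)xy − μ̂₁(1−x)y − μ̂₂(1−y)x. Then k''(1) = 2·((μ̂₁+μ̂₂−2(λ̂₁+λ̂₂))μ̂₁μ̂₂ + λ̂₁²μ̂₂ + λ̂₂²μ̂₁)/(μ̂₁−λ̂₁)³. -/

import Mathlib

theorem stmt_19 (l1 l2 m1 m2 : ℝ)
    (hl1 : 0 < l1) (hl2 : 0 < l2) (hm1 : 0 < m1) (hm2 : 0 < m2)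
    (hlt : l1 < m1)
    (k k' : ℝ → ℝ) (hk1 : k 1 = 1)
    (hroot : ∀ᶠ y in nhds (1 : ℝ),
      l1 * (1 - k y) * k y * y + l2 * (1 - y) * k y * y
        - m1 * (1 - k y) * y - m2 * (1 - y) * k y = 0)
    (hderiv : ∀ᶠ y in nhds (1 : ℝ), HasDerivAt k (k' y) y)
    (d2 : ℝ) (hd2 : HasDerivAt k' d2 1) :
    d2 = 2 * ((m1 + m2 - 2 * (l1 + l2)) * m1 * m2 + l1 ^ 2 * m2 + l2 ^ 2 * m1) /
      (m1 - l1) ^ 3 := by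
  -- Step 1: the first derivative of R(k y, y) vanishes near 1
  have hg : ∀ᶠ y in nhds (1 : ℝ),
      l1 * (-(k' y) * k y * y + (1 - k y) * k' y * y + (1 - k y) * k y)
        + l2 * (-(k y) * y + (1 - y) * k' y * y + (1 - y) * k y)
        - m1 * (-(k' y) * y + (1 - k y))
        - m2 * (-(k y) + (1 - y) * k' y) = 0 := by
    filter_upwards [hderiv, hroot.eventually_nhds] with y hky hFy
    have h1 : HasDerivAt (fun z => 1 - k z) (-(k' y)) y := hky.const_sub 1
    have h2 : HasDerivAt (fun z : ℝ => 1 - z) (-1 : ℝ) y := (hasDerivAt_id y).const_sub 1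
    have hF := (((((h1.const_mul l1).mul hky).mul (hasDerivAt_id y)).add
        ((((h2.const_mul l2).mul hky).mul (hasDerivAt_id y)))).sub
        ((h1.const_mul m1).mul (hasDerivAt_id y))).sub
        ((h2.const_mul m2).mul hky)
    have hF0 : HasDerivAt (fun z => l1 * (1 - k z) * k z * z + l2 * (1 - z) * k z * z
        - m1 * (1 - k z) * z - m2 * (1 - z) * k z) (0 : ℝ) y :=
      (hasDerivAt_const y (0 : ℝ)).congr_of_eventuallyEq (by filter_upwards [hFy] with z hz using hz)
    have huniq := hF.unique hF0
    simp only [id_eq, Pi.mul_apply, Pi.neg_apply] at huniq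
    linear_combination huniq
  -- Step 2: evaluate and differentiate at 1
  have hk1d : HasDerivAt k (k' 1) 1 := hderiv.self_of_nhds
  have h1 : HasDerivAt (fun z => 1 - k z) (-(k' 1)) 1 := hk1d.const_sub 1
  have h2 : HasDerivAt (fun z : ℝ => 1 - z) (-1 : ℝ) 1 := (hasDerivAt_id 1).const_sub 1
  have hP := ((((hd2.neg.mul hk1d).mul (hasDerivAt_id 1)).add
      ((h1.mul hd2).mul (hasDerivAt_id 1))).add (h1.mul hk1d)).const_mul l1
  have hQ := ((((hk1d.neg).mul (hasDerivAt_id 1)).add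
      ((h2.mul hd2).mul (hasDerivAt_id 1))).add (h2.mul hk1d)).const_mul l2
  have hR := (((hd2.neg).mul (hasDerivAt_id 1)).add h1).const_mul m1
  have hS := ((hk1d.neg).add (h2.mul hd2)).const_mul m2
  have hG := ((hP.add hQ).sub hR).sub hS
  have hG0 : HasDerivAt (fun y =>
      l1 * (-(k' y) * k y * y + (1 - k y) * k' y * y + (1 - k y) * k y)
        + l2 * (-(k y) * y + (1 - y) * k' y * y + (1 - y) * k y)
        - m1 * (-(k' y) * y + (1 - k y))
        - m2 * (-(k y) + (1 - y) * k' y)) (0 : ℝ) 1 :=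
    (hasDerivAt_const 1 (0 : ℝ)).congr_of_eventuallyEq (by filter_upwards [hg] with z hz using hz)
  have hE2raw := hG.unique hG0
  have hE1raw := hg.self_of_nhds
  rw [hk1] at hE1raw hE2raw
  simp only [id_eq, Pi.mul_apply, Pi.neg_apply, hk1] at hE2raw
  have hE1 : (m1 - l1) * k' 1 = l2 - m2 := by linear_combination hE1raw
  have hE2 : (m1 - l1) * d2 = 2 * l1 * (k' 1) ^ 2 + 2 * (l1 + l2 - m1 - m2) * k' 1 + 2 * l2 := by
    linear_combination hE2raw
  have hne : (m1 - l1) ^ 3 ≠ 0 := pow_ne_zero _ (sub_ne_zero.mpr (ne_of_gt hlt))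
  rw [eq_div_iff hne]
  linear_combination (m1 - l1) ^ 2 * hE2 +
    (2 * l1 * ((m1 - l1) * k' 1 + (l2 - m2)) + 2 * (l1 + l2 - m1 - m2) * (m1 - l1)) * hE1
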